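/- Let p be an odd prime, A = (ℤ/pⁿℤ)^g, K = A × Â ≅ (ℤ/pⁿℤ)^{2g}, and for r = 0,…,n define Δ_r = Σ_{k ∈ p^r K} 𝒲_k, where 𝒲_k are the normalized Weyl operators on L²(A). Then for all r, s ∈ {0,…,n}: Δ_r Δ_s = p^{2g(n − max{r,s})} Δ_{max{min{r,s}, n − max{r,s}}}. In particular the algebra spanned by Δ_0,…,Δ_n is commutative. -/

import Mathlib

/-!
Statement 19: for `p` an odd prime, `A = (ℤ/pⁿℤ)^g` and `K = A × Â ≅ (ℤ/pⁿℤ)^{2g}`,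
the operators `Δ_r = Σ_{k ∈ p^r K} 𝒲_k` satisfy
`Δ_r Δ_s = p^{2g(n − max{r,s})} Δ_{max{min{r,s}, n − max{r,s}}}`;
in particular the algebra they span is commutative.
-/

noncomputable section
open scoped Classical Real

variable (p n g : ℕ) [NeZero (p ^ n)]

/-- `K ≅ (ℤ/pⁿℤ)^{2g}`, identifying `Â` with `A = (ℤ/pⁿℤ)^g` via
`χ_y(x) = exp(2πi x·y/pⁿ)`. -/
abbrev KZ := (Fin g → ZMod (p ^ n)) × (Fin g → ZMod (p ^ n))

/-- The standard character `ψ(t) = exp(2πi t/pⁿ)` of `ℤ/pⁿℤ`. -/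
def psi (t : ZMod (p ^ n)) : ℂ :=
  Complex.exp (2 * π * Complex.I * t.val / (p ^ n))

/-- The normalized Weyl operator `𝒲_{(x, χ_y)}` on `L²((ℤ/pⁿℤ)^g)`:
`(𝒲_{(x,χ_y)} f)(u) = ψ((u − x/2)·y) f(u − x)`, where `x/2 = 2⁻¹ x`. -/
def NWeylZ (k : KZ p n g) : Module.End ℂ ((Fin g → ZMod (p ^ n)) → ℂ) where
  toFun f := fun u =>
    psi p n (∑ i, (u i - (2⁻¹ : ZMod (p ^ n)) * k.1 i) * k.2 i) * f (u - k.1)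
  map_add' f h := by funext u; simp [mul_add]
  map_smul' c f := by funext u; simp [smul_eq_mul]; ring

/-- All entries of `k` are divisible by `p^r`, i.e. `k ∈ p^r K`. -/
def DivByZ (r : ℕ) (k : KZ p n g) : Prop :=
  (∀ i, (p : ZMod (p ^ n)) ^ r ∣ k.1 i) ∧ (∀ i, (p : ZMod (p ^ n)) ^ r ∣ k.2 i)

/-- `Δ_r = Σ_{k ∈ p^r K} 𝒲_k`. -/
def Delta (r : ℕ) : Module.End ℂ ((Fin g → ZMod (p ^ n)) → ℂ) :=
  ∑ k : KZ p n g, if DivByZ p n g r k then NWeylZ p n g k else 0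

set_option linter.unusedSectionVars false

lemma pn_ne_zero : ((p : ℂ)) ^ n ≠ 0 := by
  have h := NeZero.ne (p ^ n)
  have : ((p ^ n : ℕ) : ℂ) ≠ 0 := Nat.cast_ne_zero.2 h
  simpa [Nat.cast_pow] using this

omit [NeZero (p ^ n)] in
lemma psi_zero : psi p n 0 = 1 := by
  simp [psi]

lemma psi_add (a b : ZMod (p ^ n)) : psi p n (a + b) = psi p n a * psi p n b := by
  have hN : ((p : ℂ)) ^ n ≠ 0 := pn_ne_zero p n
  set q : ℕ := (a.val + b.val) / p ^ n with hq
  have e : (a + b).val + p ^ n * q = a.val + b.val := by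
    rw [ZMod.val_add, hq, Nat.mod_add_div]
  have hc : (((a + b).val : ℕ) : ℂ) = (a.val : ℂ) + (b.val : ℂ) - (p : ℂ) ^ n * (q : ℂ) := by
    have h2 := congrArg (fun m : ℕ => (m : ℂ)) e
    push_cast at h2
    linear_combination h2
  have key : (2 * π * Complex.I * ((a+b).val) / (p^n) : ℂ)
      = (2 * π * Complex.I * (a.val) / (p^n) + 2 * π * Complex.I * (b.val) / (p^n))
        + ((-(q : ℤ) : ℤ) : ℂ) * (2 * π * Complex.I) := by
    rw [hc]
    push_cast
    field_simp
    ring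
  rw [psi, psi, psi, key, Complex.exp_add, Complex.exp_add,
    Complex.exp_int_mul_two_pi_mul_I, mul_one]

lemma psi_sum {ι : Type*} (s : Finset ι) (f : ι → ZMod (p ^ n)) :
    psi p n (∑ i ∈ s, f i) = ∏ i ∈ s, psi p n (f i) := by
  induction s using Finset.induction with
  | empty => simp [psi_zero]
  | insert _ _ h ih => rw [Finset.sum_insert h, Finset.prod_insert h, psi_add, ih]

lemma psi_eq_one_iff (t : ZMod (p ^ n)) : psi p n t = 1 ↔ t = 0 := by
  constructor
  · intro h
    rw [psi, Complex.exp_eq_one_iff] at h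
    obtain ⟨k, hk⟩ := h
    have hN : ((p : ℂ)) ^ n ≠ 0 := pn_ne_zero p n
    have hπ : (π : ℂ) ≠ 0 := by exact_mod_cast Real.pi_ne_zero
    have h2pi : (2 * π * Complex.I : ℂ) ≠ 0 := by
      exact mul_ne_zero (mul_ne_zero two_ne_zero hπ) Complex.I_ne_zero
    have hmul : 2 * π * Complex.I * (t.val : ℂ) = (k : ℂ) * (2 * π * Complex.I) * (p : ℂ) ^ n := by
      have h3 := congrArg (fun z : ℂ => z * (p : ℂ) ^ n) hk
      try simp only at h3
      rwa [div_mul_cancel₀ _ hN] at h3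
    have hval : (t.val : ℂ) = (k : ℂ) * (p : ℂ) ^ n :=
      mul_left_cancel₀ h2pi (by linear_combination hmul)
    have hz : (t.val : ℤ) = k * (p : ℤ) ^ n := by exact_mod_cast hval
    have hdvd : (p ^ n : ℕ) ∣ t.val := by
      have : ((p ^ n : ℕ) : ℤ) ∣ (t.val : ℤ) := ⟨k, by rw [hz]; push_cast; ring⟩
      exact_mod_cast this
    have hv0 : t.val = 0 := Nat.eq_zero_of_dvd_of_lt hdvd (ZMod.val_lt t)
    exact (ZMod.val_eq_zero t).1 hv0
  · rintro rfl; exact psi_zero p n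

/-- full-group character orthogonality -/
lemma sum_psi (c : ZMod (p ^ n)) :
    ∑ t : ZMod (p ^ n), psi p n (c * t) = if c = 0 then ((p : ℂ) ^ n) else 0 := by
  split_ifs with hc
  · subst hc
    simp only [zero_mul, psi_zero, Finset.sum_const, Finset.card_univ, ZMod.card, nsmul_eq_mul,
      mul_one]
    push_cast
    ring
  · have hshift : ∑ t : ZMod (p ^ n), psi p n (c * t)
        = ∑ t : ZMod (p ^ n), psi p n (c * (t + 1)) :=
      (Fintype.sum_equiv (Equiv.addRight (1 : ZMod (p ^ n))) _ _ (fun t => by simp)).symm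
    have hne : psi p n c ≠ 1 := fun h => hc ((psi_eq_one_iff p n c).1 h)
    have : (psi p n c - 1) * ∑ t : ZMod (p ^ n), psi p n (c * t) = 0 := by
      rw [sub_mul, one_mul, sub_eq_zero]
      calc psi p n c * ∑ t : ZMod (p ^ n), psi p n (c * t)
          = ∑ t : ZMod (p ^ n), psi p n (c * (t + 1)) := by
            rw [Finset.mul_sum]
            exact Finset.sum_congr rfl fun t _ => by rw [mul_add, mul_one, psi_add]; ring
        _ = ∑ t : ZMod (p ^ n), psi p n (c * t) := hshift.symm
    rcases mul_eq_zero.1 this with h | h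
    · exact absurd (by linear_combination h : psi p n c = 1) hne
    · exact h

/-- divisibility in `ZMod (p^n)` vs divisibility of values -/
lemma dvd_iff_val (a : ℕ) (ha : a ≤ n) (t : ZMod (p ^ n)) :
    (p : ZMod (p ^ n)) ^ a ∣ t ↔ p ^ a ∣ t.val := by
  have hdvd : p ^ a ∣ p ^ n := pow_dvd_pow p ha
  constructor
  · rintro ⟨u, rfl⟩
    have h1 : ((p : ZMod (p ^ n)) ^ a) = ((p ^ a : ℕ) : ZMod (p ^ n)) := by push_cast; ring
    rw [h1, ZMod.val_mul, ZMod.val_natCast]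
    rw [Nat.dvd_mod_iff hdvd]
    exact Dvd.dvd.mul_right ((Nat.dvd_mod_iff hdvd).2 dvd_rfl) _
  · rintro ⟨m, hm⟩
    refine ⟨(m : ZMod (p ^ n)), ?_⟩
    have : ((t.val : ℕ) : ZMod (p ^ n)) = t := ZMod.natCast_zmod_val t
    rw [← this, hm]
    push_cast
    ring

lemma pow_pos_aux (a : ℕ) (ha : a ≤ n) : 0 < p ^ a :=
  Nat.pos_of_ne_zero fun h => NeZero.ne (p ^ n) (zero_dvd_iff.mp (h ▸ pow_dvd_pow p ha))

lemma pmps_aux (a : ℕ) (ha : a ≤ n) : p ^ (n - a) * p ^ a = p ^ n := by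
  rw [← pow_add, Nat.sub_add_cancel ha]

lemma card_div (a : ℕ) (ha : a ≤ n) :
    (Finset.univ.filter fun t : ZMod (p ^ n) => (p : ZMod (p ^ n)) ^ a ∣ t).card = p ^ (n - a) := by
  have hp0 : 0 < p ^ a := pow_pos_aux p n a ha
  have hval : ∀ t : ZMod (p ^ n), t.val < p ^ n := fun t => ZMod.val_lt t
  have hkey : p ^ (n - a) * p ^ a = p ^ n := pmps_aux p n a ha
  have hfilter : (Finset.univ.filter fun t : ZMod (p ^ n) => (p : ZMod (p ^ n)) ^ a ∣ t)
      = Finset.univ.filter fun t : ZMod (p ^ n) => p ^ a ∣ t.val := by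
    ext t; simp [Finset.mem_filter, dvd_iff_val p n a ha]
  rw [hfilter, ← Finset.card_range (p ^ (n - a))]
  apply Finset.card_nbij' (fun t => t.val / p ^ a) (fun m => ((p ^ a * m : ℕ) : ZMod (p ^ n)))
  · intro t ht
    simp only [Finset.coe_filter, Set.mem_setOf_eq, Finset.coe_range, Set.mem_Iio, Finset.mem_filter, Finset.mem_univ, true_and] at ht
    simp only [Finset.coe_range, Set.mem_Iio, Finset.mem_range]
    rw [Nat.div_lt_iff_lt_mul hp0]
    calc t.val < p ^ n := hval t
      _ = p ^ (n - a) * p ^ a := hkey.symm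
  · intro m hm
    simp only [Finset.coe_range, Set.mem_Iio, Finset.mem_range] at hm
    have hlt : p ^ a * m < p ^ n := by
      calc p ^ a * m < p ^ a * p ^ (n - a) := by
            exact mul_lt_mul_of_pos_left hm hp0
        _ = p ^ n := by rw [mul_comm]; exact hkey
    simp only [Finset.coe_filter, Set.mem_setOf_eq, Finset.coe_range, Set.mem_Iio, Finset.mem_filter, Finset.mem_univ, true_and]
    rw [ZMod.val_natCast, Nat.mod_eq_of_lt hlt]
    exact Dvd.intro m rfl
  · intro t ht
    simp only [Finset.coe_filter, Set.mem_setOf_eq, Finset.coe_range, Set.mem_Iio, Finset.mem_filter, Finset.mem_univ, true_and] at ht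
    dsimp only
    rw [Nat.mul_div_cancel' ht]
    exact ZMod.natCast_zmod_val t
  · intro m hm
    simp only [Finset.coe_range, Set.mem_Iio, Finset.mem_range] at hm
    have hlt : p ^ a * m < p ^ n := by
      calc p ^ a * m < p ^ a * p ^ (n - a) := by
            exact mul_lt_mul_of_pos_left hm hp0
        _ = p ^ n := by rw [mul_comm]; exact hkey
    dsimp only
    rw [ZMod.val_natCast, Nat.mod_eq_of_lt hlt, Nat.mul_div_cancel_left _ hp0]

lemma mul_pow_eq_zero_iff (a : ℕ) (ha : a ≤ n) (c : ZMod (p ^ n)) :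
    c * (p : ZMod (p ^ n)) ^ a = 0 ↔ (p : ZMod (p ^ n)) ^ (n - a) ∣ c := by
  have hp0 : 0 < p ^ a := pow_pos_aux p n a ha
  have h1 : c * (p : ZMod (p ^ n)) ^ a = ((c.val * p ^ a : ℕ) : ZMod (p ^ n)) := by
    conv_lhs => rw [← ZMod.natCast_zmod_val c]
    push_cast
    ring
  rw [h1, ZMod.natCast_eq_zero_iff, dvd_iff_val p n (n - a) (Nat.sub_le n a)]
  constructor
  · intro h
    have h2 : p ^ (n - a) * p ^ a ∣ c.val * p ^ a := by
      rw [pmps_aux p n a ha]; exact h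
    exact (Nat.mul_dvd_mul_iff_right hp0).1 h2
  · intro h
    have h2 : p ^ (n - a) * p ^ a ∣ c.val * p ^ a := Nat.mul_dvd_mul h dvd_rfl
    rwa [pmps_aux p n a ha] at h2

lemma card_solutions (a : ℕ) (ha : a ≤ n) (b : ZMod (p ^ n)) (hb : (p : ZMod (p ^ n)) ^ a ∣ b) :
    (Finset.univ.filter fun u : ZMod (p ^ n) => (p : ZMod (p ^ n)) ^ a * u = b).card = p ^ a := by
  obtain ⟨u₀, rfl⟩ := hb
  have h1 : (Finset.univ.filter fun u : ZMod (p ^ n) => (p : ZMod (p ^ n)) ^ a * u = (p : ZMod (p ^ n)) ^ a * u₀).card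
      = (Finset.univ.filter fun v : ZMod (p ^ n) => (p : ZMod (p ^ n)) ^ (n - a) ∣ v).card := by
    apply Finset.card_nbij' (fun u => u - u₀) (fun v => v + u₀)
    · intro u hu
      simp only [Finset.coe_filter, Set.mem_setOf_eq, Finset.coe_range, Set.mem_Iio, Finset.mem_filter, Finset.mem_univ, true_and] at hu ⊢
      rw [← mul_pow_eq_zero_iff p n a ha]
      rw [sub_mul]
      rw [mul_comm ((p : ZMod (p ^ n)) ^ a) u] at hu
      rw [hu, mul_comm, sub_self]
    · intro v hv
      simp only [Finset.coe_filter, Set.mem_setOf_eq, Finset.coe_range, Set.mem_Iio, Finset.mem_filter, Finset.mem_univ, true_and] at hv ⊢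
      rw [← mul_pow_eq_zero_iff p n a ha] at hv
      rw [mul_add]
      rw [mul_comm] at hv
      rw [hv, zero_add]
    · intro u _; ring
    · intro v _; ring
  rw [h1, card_div p n (n - a) (Nat.sub_le n a), Nat.sub_sub_self ha]

/-- the key single-coordinate sum -/
lemma sum_div (a : ℕ) (ha : a ≤ n) (c : ZMod (p ^ n)) :
    ∑ t : ZMod (p ^ n), (if (p : ZMod (p ^ n)) ^ a ∣ t then psi p n (c * t) else 0)
      = if (p : ZMod (p ^ n)) ^ (n - a) ∣ c then ((p : ℂ) ^ (n - a)) else 0 := by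
  have hp0 : 0 < p ^ a := pow_pos_aux p n a ha
  have hpC : ((p : ℂ) ^ a) ≠ 0 := by
    have h2 : ((p ^ a : ℕ) : ℂ) ≠ 0 := Nat.cast_ne_zero.2 hp0.ne'
    push_cast at h2
    exact h2
  set G : ZMod (p ^ n) → ℂ := fun t => if (p : ZMod (p ^ n)) ^ a ∣ t then psi p n (c * t) else 0
    with hG
  have himg : Finset.univ.image (fun u : ZMod (p ^ n) => (p : ZMod (p ^ n)) ^ a * u)
      = Finset.univ.filter fun t : ZMod (p ^ n) => (p : ZMod (p ^ n)) ^ a ∣ t := by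
    ext b
    simp only [Finset.mem_image, Finset.mem_filter, Finset.mem_univ, true_and]
    constructor
    · rintro ⟨u, -, rfl⟩; exact Dvd.intro u rfl
    · rintro ⟨u, rfl⟩; exact ⟨u, rfl⟩
  have hcomp : ∑ u : ZMod (p ^ n), G ((p : ZMod (p ^ n)) ^ a * u)
      = (p ^ a : ℕ) • ∑ t : ZMod (p ^ n), G t := by
    rw [Finset.sum_comp G (fun u : ZMod (p ^ n) => (p : ZMod (p ^ n)) ^ a * u), himg]
    rw [Finset.smul_sum]
    rw [Finset.sum_filter]
    apply Finset.sum_congr rfl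
    intro b _
    by_cases hb : (p : ZMod (p ^ n)) ^ a ∣ b
    · rw [if_pos hb, card_solutions p n a ha b hb]
    · rw [if_neg hb]
      have : G b = 0 := by rw [hG]; simp [hb]
      rw [this, smul_zero]
  have hGeval : ∀ u, G ((p : ZMod (p ^ n)) ^ a * u) = psi p n ((c * (p : ZMod (p ^ n)) ^ a) * u) := by
    intro u
    rw [hG]
    simp only
    rw [if_pos (Dvd.intro u rfl)]
    ring_nf
  have hLHS : ∑ u : ZMod (p ^ n), G ((p : ZMod (p ^ n)) ^ a * u)
      = if c * (p : ZMod (p ^ n)) ^ a = 0 then ((p : ℂ) ^ n) else 0 := by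
    rw [Finset.sum_congr rfl fun u _ => hGeval u, sum_psi]
  rw [hLHS] at hcomp
  have hif : (if c * (p : ZMod (p ^ n)) ^ a = 0 then ((p : ℂ) ^ n) else 0)
      = (p ^ a : ℕ) • (if (p : ZMod (p ^ n)) ^ (n - a) ∣ c then ((p : ℂ) ^ (n - a)) else 0) := by
    rw [if_congr (mul_pow_eq_zero_iff p n a ha c) rfl rfl]
    split_ifs with h
    · rw [nsmul_eq_mul]
      push_cast
      rw [← pow_add, Nat.add_sub_cancel' ha]
    · rw [smul_zero]
  rw [hif] at hcomp
  have := hcomp.symm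
  rw [nsmul_eq_mul, nsmul_eq_mul] at this
  apply mul_left_cancel₀ (show ((p ^ a : ℕ) : ℂ) ≠ 0 from by push_cast; exact hpC)
  exact this

/-- 2 is invertible mod p^n -/
lemma two_mul_inv (hp : p.Prime) (hodd : Odd p) :
    (2 : ZMod (p ^ n)) * 2⁻¹ = 1 := by
  apply ZMod.mul_inv_of_unit
  have : IsUnit ((2 : ℕ) : ZMod (p ^ n)) := by
    rw [ZMod.isUnit_iff_coprime]
    exact Nat.coprime_two_left.2 (hodd.pow)
  simpa using this

lemma dvd_half_iff (hp : p.Prime) (hodd : Odd p) (u x : ZMod (p ^ n)) :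
    (u ∣ (2⁻¹ : ZMod (p ^ n)) * x) ↔ u ∣ x := by
  have h2 := two_mul_inv p n hp hodd
  constructor
  · intro h
    have : x = 2 * ((2⁻¹ : ZMod (p ^ n)) * x) := by rw [← mul_assoc, h2, one_mul]
    rw [this]
    exact Dvd.dvd.mul_left h 2
  · intro h
    exact Dvd.dvd.mul_left h _

/-- helper : product of ite = ite of forall -/
lemma prod_ite_all {ι : Type*} [Fintype ι] (P : ι → Prop) (x : ι → ℂ) :
    (∏ i, if P i then x i else 0) = if (∀ i, P i) then ∏ i, x i else 0 := by
  split_ifs with h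
  · exact Finset.prod_congr rfl fun i _ => if_pos (h i)
  · push_neg at h
    obtain ⟨i, hi⟩ := h
    exact Finset.prod_eq_zero (Finset.mem_univ i) (if_neg hi)

/-- DivByZ basic lemmas -/
lemma divby_mono {a b : ℕ} (hab : a ≤ b) {k : KZ p n g} (h : DivByZ p n g b k) :
    DivByZ p n g a k :=
  ⟨fun i => dvd_trans (pow_dvd_pow _ hab) (h.1 i), fun i => dvd_trans (pow_dvd_pow _ hab) (h.2 i)⟩

lemma divby_and_iff_max (a b : ℕ) (k : KZ p n g) :
    (DivByZ p n g a k ∧ DivByZ p n g b k) ↔ DivByZ p n g (max a b) k := by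
  constructor
  · rintro ⟨h1, h2⟩
    rcases le_total a b with h | h
    · rwa [max_eq_right h]
    · rwa [max_eq_left h]
  · intro h
    exact ⟨divby_mono p n g (le_max_left a b) h, divby_mono p n g (le_max_right a b) h⟩

lemma divby_sub_iff {a : ℕ} {l : KZ p n g} (hl : DivByZ p n g a l) (m : KZ p n g) :
    DivByZ p n g a (m - l) ↔ DivByZ p n g a m := by
  constructor
  · rintro ⟨h1, h2⟩
    constructor
    · intro i
      have := dvd_add (h1 i) (hl.1 i)
      simpa using this
    · intro i
      have := dvd_add (h2 i) (hl.2 i)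
      simpa using this
  · rintro ⟨h1, h2⟩
    exact ⟨fun i => by simpa using dvd_sub (h1 i) (hl.1 i),
           fun i => by simpa using dvd_sub (h2 i) (hl.2 i)⟩

lemma divby_neg_iff (a : ℕ) (m : KZ p n g) :
    DivByZ p n g a (-m) ↔ DivByZ p n g a m := by
  constructor <;> rintro ⟨h1, h2⟩
  · exact ⟨fun i => by have := h1 i; simpa [dvd_neg] using this,
      fun i => by have := h2 i; simpa [dvd_neg] using this⟩
  · exact ⟨fun i => by have := h1 i; simpa [dvd_neg] using this,
      fun i => by have := h2 i; simpa [dvd_neg] using this⟩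

/-- The Weyl cocycle exponent. -/
def cExp (k l : KZ p n g) : ZMod (p ^ n) :=
  2⁻¹ * (∑ i, l.1 i * k.2 i - ∑ i, k.1 i * l.2 i)

lemma NWeyl_mul (hp : p.Prime) (hodd : Odd p) (k l : KZ p n g) :
    NWeylZ p n g k * NWeylZ p n g l
      = psi p n (cExp p n g k l) • NWeylZ p n g (k + l) := by
  have h2 : (2 : ZMod (p ^ n)) * 2⁻¹ = 1 := two_mul_inv p n hp hodd
  apply LinearMap.ext; intro f
  funext u
  simp only [NWeylZ, Module.End.mul_apply, LinearMap.coe_mk, AddHom.coe_mk,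
    LinearMap.smul_apply, Pi.smul_apply, smul_eq_mul, Pi.sub_apply, Prod.fst_add,
    Prod.snd_add, Pi.add_apply]
  rw [sub_sub]
  rw [← mul_assoc, ← mul_assoc, ← psi_add, ← psi_add]
  congr 2
  have hsplit : cExp p n g k l = ∑ i, ((2⁻¹ : ZMod (p ^ n)) * (l.1 i * k.2 i)
      - (2⁻¹ : ZMod (p ^ n)) * (k.1 i * l.2 i)) := by
    simp only [cExp]
    rw [mul_sub, Finset.mul_sum, Finset.mul_sum, ← Finset.sum_sub_distrib]
  rw [hsplit, ← Finset.sum_add_distrib, ← Finset.sum_add_distrib]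
  apply Finset.sum_congr rfl
  intro i _
  linear_combination (k.1 i * l.2 i) * h2

lemma cExp_sub_left (m l : KZ p n g) : cExp p n g (m - l) l = cExp p n g m l := by
  simp only [cExp, Prod.fst_sub, Prod.snd_sub, Pi.sub_apply]
  congr 1
  simp only [mul_sub, sub_mul, Finset.sum_sub_distrib]
  ring

lemma cExp_sub_right (k m : KZ p n g) : cExp p n g k (m - k) = cExp p n g k m := by
  simp only [cExp, Prod.fst_sub, Prod.snd_sub, Pi.sub_apply]
  congr 1
  simp only [mul_sub, sub_mul, Finset.sum_sub_distrib]
  ring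

lemma cExp_swap (k m : KZ p n g) : cExp p n g k m = cExp p n g (-m) k := by
  simp only [cExp, Prod.fst_neg, Prod.snd_neg, Pi.neg_apply]
  congr 1
  simp only [mul_neg, neg_mul, Finset.sum_neg_distrib]
  ring

/-- The key character sum over `p^a K`. -/
lemma sum_cocycle (hp : p.Prime) (hodd : Odd p) (a : ℕ) (ha : a ≤ n) (m : KZ p n g) :
    ∑ l : KZ p n g, (if DivByZ p n g a l then psi p n (cExp p n g m l) else 0)
      = if DivByZ p n g (n - a) m then ((p : ℂ) ^ (2 * g * (n - a))) else 0 := by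
  have hfac : ∀ c : Fin g → ZMod (p ^ n),
      (∑ l1 : Fin g → ZMod (p ^ n),
        if (∀ i, (p : ZMod (p ^ n)) ^ a ∣ l1 i) then psi p n (∑ i, c i * l1 i) else 0)
      = if (∀ i, (p : ZMod (p ^ n)) ^ (n - a) ∣ c i) then ((p : ℂ) ^ (n - a)) ^ g else 0 := by
    intro c
    calc ∑ l1 : Fin g → ZMod (p ^ n),
          (if (∀ i, (p : ZMod (p ^ n)) ^ a ∣ l1 i) then psi p n (∑ i, c i * l1 i) else 0)
        = ∑ l1 : Fin g → ZMod (p ^ n),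
            ∏ i, (if (p : ZMod (p ^ n)) ^ a ∣ l1 i then psi p n (c i * l1 i) else 0) := by
          apply Finset.sum_congr rfl
          intro l1 _
          rw [psi_sum]
          convert (prod_ite_all _ _).symm
      _ = ∏ i, ∑ t : ZMod (p ^ n), (if (p : ZMod (p ^ n)) ^ a ∣ t then psi p n (c i * t) else 0) := by
          rw [Finset.prod_univ_sum, Fintype.piFinset_univ]
      _ = ∏ i, (if (p : ZMod (p ^ n)) ^ (n - a) ∣ c i then ((p : ℂ) ^ (n - a)) else 0) := by
          exact Finset.prod_congr rfl fun i _ => sum_div p n a ha (c i)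
      _ = if (∀ i, (p : ZMod (p ^ n)) ^ (n - a) ∣ c i) then ((p : ℂ) ^ (n - a)) ^ g else 0 := by
          rw [show (∏ i, (if (p : ZMod (p ^ n)) ^ (n - a) ∣ c i then ((p : ℂ) ^ (n - a)) else 0))
              = if (∀ i, (p : ZMod (p ^ n)) ^ (n - a) ∣ c i) then ∏ _i : Fin g, ((p : ℂ) ^ (n - a)) else 0
              from by convert prod_ite_all _ _]
          split_ifs with h
          · simp [Finset.prod_const]
          · rfl
  have hexp : ∀ l1 l2 : Fin g → ZMod (p ^ n), cExp p n g m (l1, l2)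
      = (∑ i, ((2⁻¹ : ZMod (p ^ n)) * m.2 i) * l1 i)
        + ∑ i, (-((2⁻¹ : ZMod (p ^ n)) * m.1 i)) * l2 i := by
    intro l1 l2
    calc cExp p n g m (l1, l2)
        = ∑ i, (2⁻¹ : ZMod (p ^ n)) * (l1 i * m.2 i - m.1 i * l2 i) := by
          simp only [cExp]
          rw [← Finset.sum_sub_distrib, Finset.mul_sum]
      _ = ∑ i, (((2⁻¹ : ZMod (p ^ n)) * m.2 i) * l1 i
            + (-((2⁻¹ : ZMod (p ^ n)) * m.1 i)) * l2 i) :=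
          Finset.sum_congr rfl fun i _ => by ring
      _ = _ := Finset.sum_add_distrib
  rw [Fintype.sum_prod_type]
  have hterm : ∀ l1 l2 : Fin g → ZMod (p ^ n),
      (if DivByZ p n g a (l1, l2) then psi p n (cExp p n g m (l1, l2)) else 0)
      = (if (∀ i, (p : ZMod (p ^ n)) ^ a ∣ l1 i)
          then psi p n (∑ i, ((2⁻¹ : ZMod (p ^ n)) * m.2 i) * l1 i) else 0)
        * (if (∀ i, (p : ZMod (p ^ n)) ^ a ∣ l2 i)
          then psi p n (∑ i, (-((2⁻¹ : ZMod (p ^ n)) * m.1 i)) * l2 i) else 0) := by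
    intro l1 l2
    by_cases h1 : (∀ i, (p : ZMod (p ^ n)) ^ a ∣ l1 i)
      <;> by_cases h2 : (∀ i, (p : ZMod (p ^ n)) ^ a ∣ l2 i)
      <;> simp [DivByZ, h1, h2, hexp, psi_add]
  simp only [hterm]
  rw [← Finset.sum_mul_sum]
  rw [hfac, hfac]
  have hd1 : ∀ i, ((p : ZMod (p ^ n)) ^ (n - a) ∣ (2⁻¹ : ZMod (p ^ n)) * m.2 i)
      ↔ ((p : ZMod (p ^ n)) ^ (n - a) ∣ m.2 i) := fun i => dvd_half_iff p n hp hodd _ _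
  have hd2 : ∀ i, ((p : ZMod (p ^ n)) ^ (n - a) ∣ -((2⁻¹ : ZMod (p ^ n)) * m.1 i))
      ↔ ((p : ZMod (p ^ n)) ^ (n - a) ∣ m.1 i) := fun i => by
    rw [dvd_neg]; exact dvd_half_iff p n hp hodd _ _
  simp only [hd1, hd2]
  by_cases h1 : (∀ i, (p : ZMod (p ^ n)) ^ (n - a) ∣ m.1 i)
    <;> by_cases h2 : (∀ i, (p : ZMod (p ^ n)) ^ (n - a) ∣ m.2 i)
    <;> simp [DivByZ, h1, h2]
  rw [← pow_add, ← pow_mul]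
  congr 1
  ring

lemma Delta_mul_le (hp : p.Prime) (hodd : Odd p) {r s : ℕ} (hrs : r ≤ s) (hs : s ≤ n) :
    Delta p n g r * Delta p n g s
      = ((p : ℂ) ^ (2 * g * (n - s))) • Delta p n g (max r (n - s)) := by
  rw [Delta, Delta, Finset.sum_mul_sum]
  have step1 : ∀ k l : KZ p n g,
      (if DivByZ p n g r k then NWeylZ p n g k else 0)
        * (if DivByZ p n g s l then NWeylZ p n g l else 0)
      = if DivByZ p n g r k ∧ DivByZ p n g s l
          then psi p n (cExp p n g k l) • NWeylZ p n g (k + l) else 0 := by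
    intro k l
    by_cases h1 : DivByZ p n g r k <;> by_cases h2 : DivByZ p n g s l
      <;> simp [h1, h2, NWeyl_mul p n g hp hodd]
  simp only [step1]
  rw [Finset.sum_comm]
  have step2 : ∀ l : KZ p n g,
      (∑ k : KZ p n g, if DivByZ p n g r k ∧ DivByZ p n g s l
          then psi p n (cExp p n g k l) • NWeylZ p n g (k + l) else 0)
      = ∑ m : KZ p n g, if DivByZ p n g r m ∧ DivByZ p n g s l
          then psi p n (cExp p n g m l) • NWeylZ p n g m else 0 := by
    intro l
    rw [Fintype.sum_equiv (Equiv.addRight l)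
      (fun k => if DivByZ p n g r k ∧ DivByZ p n g s l
          then psi p n (cExp p n g k l) • NWeylZ p n g (k + l) else 0)
      (fun m => if DivByZ p n g r (m - l) ∧ DivByZ p n g s l
          then psi p n (cExp p n g (m - l) l) • NWeylZ p n g (m - l + l) else 0)
      (fun k => by simp)]
    apply Finset.sum_congr rfl
    intro m _
    by_cases hl : DivByZ p n g s l
    · have hrl : DivByZ p n g r l := divby_mono p n g hrs hl
      rw [divby_sub_iff p n g hrl m, cExp_sub_left, sub_add_cancel]
    · rw [if_neg (fun h => hl h.2), if_neg (fun h => hl h.2)]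
  simp only [step2]
  rw [Finset.sum_comm]
  have step4 : ∀ m : KZ p n g,
      (∑ l : KZ p n g, if DivByZ p n g r m ∧ DivByZ p n g s l
          then psi p n (cExp p n g m l) • NWeylZ p n g m else 0)
      = (if DivByZ p n g (max r (n - s)) m then ((p : ℂ) ^ (2 * g * (n - s))) else 0)
          • NWeylZ p n g m := by
    intro m
    by_cases hm : DivByZ p n g r m
    · simp only [hm, true_and]
      have hpull : (∑ l : KZ p n g, if DivByZ p n g s l
            then psi p n (cExp p n g m l) • NWeylZ p n g m else 0)
          = (∑ l : KZ p n g, if DivByZ p n g s l then psi p n (cExp p n g m l) else 0)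
              • NWeylZ p n g m := by
        rw [Finset.sum_smul]
        apply Finset.sum_congr rfl
        intro l _
        split_ifs
        · rfl
        · rw [zero_smul]
      rw [hpull, sum_cocycle p n g hp hodd s hs m]
      have hiff : DivByZ p n g (n - s) m ↔ DivByZ p n g (max r (n - s)) m := by
        rw [← divby_and_iff_max]
        exact ⟨fun h => ⟨hm, h⟩, fun h => h.2⟩
      rw [if_congr hiff rfl rfl]
    · have hnot : ¬ DivByZ p n g (max r (n - s)) m :=
        fun h => hm (divby_mono p n g (le_max_left _ _) h)
      simp [hm, hnot]
  simp only [step4]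
  rw [Delta, Finset.smul_sum]
  apply Finset.sum_congr rfl
  intro m _
  split_ifs
  · rfl
  · simp

lemma Delta_mul_ge (hp : p.Prime) (hodd : Odd p) {r s : ℕ} (hsr : s ≤ r) (hr : r ≤ n) :
    Delta p n g r * Delta p n g s
      = ((p : ℂ) ^ (2 * g * (n - r))) • Delta p n g (max s (n - r)) := by
  rw [Delta, Delta, Finset.sum_mul_sum]
  have step1 : ∀ k l : KZ p n g,
      (if DivByZ p n g r k then NWeylZ p n g k else 0)
        * (if DivByZ p n g s l then NWeylZ p n g l else 0)
      = if DivByZ p n g r k ∧ DivByZ p n g s l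
          then psi p n (cExp p n g k l) • NWeylZ p n g (k + l) else 0 := by
    intro k l
    by_cases h1 : DivByZ p n g r k <;> by_cases h2 : DivByZ p n g s l
      <;> simp [h1, h2, NWeyl_mul p n g hp hodd]
  simp only [step1]
  have step2 : ∀ k : KZ p n g,
      (∑ l : KZ p n g, if DivByZ p n g r k ∧ DivByZ p n g s l
          then psi p n (cExp p n g k l) • NWeylZ p n g (k + l) else 0)
      = ∑ m : KZ p n g, if DivByZ p n g r k ∧ DivByZ p n g s m
          then psi p n (cExp p n g k m) • NWeylZ p n g m else 0 := by
    intro k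
    rw [Fintype.sum_equiv (Equiv.addRight k)
      (fun l => if DivByZ p n g r k ∧ DivByZ p n g s l
          then psi p n (cExp p n g k l) • NWeylZ p n g (k + l) else 0)
      (fun m => if DivByZ p n g r k ∧ DivByZ p n g s (m - k)
          then psi p n (cExp p n g k (m - k)) • NWeylZ p n g (k + (m - k)) else 0)
      (fun l => by simp)]
    apply Finset.sum_congr rfl
    intro m _
    by_cases hk : DivByZ p n g r k
    · have hsk : DivByZ p n g s k := divby_mono p n g hsr hk
      rw [divby_sub_iff p n g hsk m, cExp_sub_right, add_sub_cancel]
    · rw [if_neg (fun h => hk h.1), if_neg (fun h => hk h.1)]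
  simp only [step2]
  rw [Finset.sum_comm]
  have step4 : ∀ m : KZ p n g,
      (∑ k : KZ p n g, if DivByZ p n g r k ∧ DivByZ p n g s m
          then psi p n (cExp p n g k m) • NWeylZ p n g m else 0)
      = (if DivByZ p n g (max s (n - r)) m then ((p : ℂ) ^ (2 * g * (n - r))) else 0)
          • NWeylZ p n g m := by
    intro m
    by_cases hm : DivByZ p n g s m
    · simp only [hm, and_true]
      have hpull : (∑ k : KZ p n g, if DivByZ p n g r k
            then psi p n (cExp p n g k m) • NWeylZ p n g m else 0)
          = (∑ k : KZ p n g, if DivByZ p n g r k then psi p n (cExp p n g (-m) k) else 0)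
              • NWeylZ p n g m := by
        rw [Finset.sum_smul]
        apply Finset.sum_congr rfl
        intro k _
        rw [cExp_swap]
        split_ifs
        · rfl
        · rw [zero_smul]
      rw [hpull, sum_cocycle p n g hp hodd r hr (-m)]
      have hiff : DivByZ p n g (n - r) (-m) ↔ DivByZ p n g (max s (n - r)) m := by
        rw [divby_neg_iff, ← divby_and_iff_max]
        exact ⟨fun h => ⟨hm, h⟩, fun h => h.2⟩
      rw [if_congr hiff rfl rfl]
    · have hnot : ¬ DivByZ p n g (max s (n - r)) m :=
        fun h => hm (divby_mono p n g (le_max_left _ _) h)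
      simp [hm, hnot]
  simp only [step4]
  rw [Delta, Finset.smul_sum]
  apply Finset.sum_congr rfl
  intro m _
  split_ifs
  · rfl
  · simp

theorem Delta_mul (hp : p.Prime) (hodd : Odd p) (hn : 1 ≤ n) (hg : 1 ≤ g) :
    (∀ r ≤ n, ∀ s ≤ n,
      Delta p n g r * Delta p n g s =
        ((p : ℂ) ^ (2 * g * (n - max r s))) •
          Delta p n g (max (min r s) (n - max r s))) ∧
    (∀ r ≤ n, ∀ s ≤ n,
      Delta p n g r * Delta p n g s = Delta p n g s * Delta p n g r) := by
  have main : ∀ r ≤ n, ∀ s ≤ n,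
      Delta p n g r * Delta p n g s =
        ((p : ℂ) ^ (2 * g * (n - max r s))) •
          Delta p n g (max (min r s) (n - max r s)) := by
    intro r hr s hs
    rcases le_total r s with h | h
    · rw [max_eq_right h, min_eq_left h]
      exact Delta_mul_le p n g hp hodd h hs
    · rw [max_eq_left h, min_eq_right h]
      exact Delta_mul_ge p n g hp hodd h hr
  refine ⟨main, fun r hr s hs => ?_⟩
  rw [main r hr s hs, main s hs r hr, max_comm s r, min_comm s r]
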